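/- arXiv:2305.13699 — 4 statements merged into one kernel-verified Lean document; each statement's English description precedes it below -/
import Mathlib

section
/- Correctness of the MEMS multi-signature: if each signer i has secret key x_i with public key X_i = g^{x_i}, commitment R_i = g^{r_i}, the timestamp hash value is w with W = g^w, the joint commitment is U = W^n · ∏_{i=1}^n R_i, the challenge is c, the coefficients are a_i, the partial signatures are s_i = w + r_i + c·a_i·x_i, and the joint signature is s = ∑_{i=1}^n s_i, then g^s = U · (∏_{i=1}^n X_i^{a_i})^c. -/
/-- Correctness of the MEMS multi-signature. -/
theorem mems_correctness
    {G : Type*} [CommGroup G] (g : G) (p : ℕ) [Fact p.Prime]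
    (hg : orderOf g = p) (n : ℕ)
    (x r a : Fin n → ZMod p) (w c : ZMod p) :
    g ^ (∑ i, (w + r i + c * a i * x i)).val =
      ((g ^ w.val) ^ n * ∏ i, g ^ (r i).val) *
        (∏ i, (g ^ (x i).val) ^ (a i).val) ^ c.val := by
  have hpow : ∀ m : ℕ, g ^ m = g ^ ((m : ZMod p)).val := by
    intro m
    conv_lhs => rw [← pow_mod_orderOf]
    rw [hg, ZMod.val_natCast]
  have hx : ∀ i, (g ^ (x i).val) ^ (a i).val = g ^ ((x i).val * (a i).val) := by
    intro i; rw [pow_mul]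
  simp only [hx, Finset.prod_pow_eq_pow_sum, ← pow_mul, ← pow_add]
  rw [hpow (w.val * n + ∑ i, (r i).val + (∑ i, (x i).val * (a i).val) * c.val)]
  congr 1
  congr 1
  push_cast [ZMod.natCast_val, ZMod.cast_id]
  simp [Finset.sum_add_distrib, Finset.mul_sum, Finset.sum_mul]
  rw [mul_comm (n:ZMod p) w]; exact add_left_cancel_iff.mpr (Finset.sum_congr rfl fun i _ => by ring)
end

section
/- Generalized forking lemma (probability bound): let A be a randomized algorithm taking input inp, random oracle answers h₁,…,h_q drawn uniformly from ZMod p, and random coins ρ, and returning either ⊥ or a pair (i, out) with 1 ≤ i ≤ q. Let acc(A) be its acceptance probability. Then the forking algorithm Fork^A, which runs A twice with the same coins and same h₁,…,h_{i−1} but fresh h_i',…,h_q', and succeeds when both runs accept with the same index i = i' and h_i ≠ h_i', succeeds with probability frk ≥ acc(A)·(acc(A)/q − 1/p). -/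
set_option maxRecDepth 8000
set_option maxHeartbeats 1000000
set_option linter.unusedSectionVars false


open scoped ENNReal

/-- The acceptance experiment for algorithm `A`. -/
noncomputable def accP {Inp Coins Out : Type*} (p q : ℕ) [NeZero p]
    (dInp : PMF Inp) (dCoins : PMF Coins)
    (A : Inp × (Fin q → ZMod p) × Coins → Option (Fin q × Out)) : PMF Bool :=
  dInp.bind fun inp => dCoins.bind fun ρ =>
    (PMF.uniformOfFintype (Fin q → ZMod p)).bind fun h =>
      PMF.pure (A (inp, h, ρ)).isSome

/-- The forking algorithm `Fork^A`: run `A`, and if it accepts with index `i`,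
rerun it with the same coins and the same oracle answers before index `i`, but
fresh answers from `i` on; succeed iff the second run accepts with the same
index and a different `i`-th oracle answer. -/
noncomputable def forkP {Inp Coins Out : Type*} (p q : ℕ) [NeZero p]
    (dInp : PMF Inp) (dCoins : PMF Coins)
    (A : Inp × (Fin q → ZMod p) × Coins → Option (Fin q × Out)) : PMF Bool :=
  dInp.bind fun inp => dCoins.bind fun ρ =>
    (PMF.uniformOfFintype (Fin q → ZMod p)).bind fun h =>
      match A (inp, h, ρ) with
      | none => PMF.pure false
      | some (i, _) =>
        (PMF.uniformOfFintype (Fin q → ZMod p)).bind fun h' =>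
          match A (inp, fun j => if (j : ℕ) < (i : ℕ) then h j else h' j, ρ) with
          | none => PMF.pure false
          | some (i', _) => PMF.pure (decide (i' = i ∧ h' i ≠ h i))

section ForkAux

variable {p q : ℕ}

private def spliceF (i : Fin q) (h h' : Fin q → ZMod p) : Fin q → ZMod p :=
  fun j => if (j : ℕ) < (i : ℕ) then h j else h' j

private def prefixF (i : Fin q) (h : Fin q → ZMod p) : Fin q → ZMod p :=
  fun j => if (j : ℕ) < (i : ℕ) then h j else 0

variable [NeZero p]

private lemma card_agree (P : Fin q → Prop) [DecidablePred P] (g : Fin q → ZMod p) :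
    (Finset.univ.filter (fun h : Fin q → ZMod p => ∀ j, P j → h j = g j)).card
      = p ^ (Finset.univ.filter (fun j => ¬ P j)).card := by
  have e : {h : Fin q → ZMod p // ∀ j, P j → h j = g j} ≃ ({j : Fin q // ¬ P j} → ZMod p) :=
    { toFun := fun h j => h.1 j.1
      invFun := fun f => ⟨fun j => if hj : P j then g j else f ⟨j, hj⟩,
        fun j hj => dif_pos hj⟩
      left_inv := by
        rintro ⟨h, hh⟩
        ext j
        by_cases hj : P j
        · simp [hj, hh j hj]
        · simp [hj]
      right_inv := by
        intro f
        ext j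
        simp [j.2] }
  rw [← Fintype.card_subtype, Fintype.card_congr e, Fintype.card_fun, ZMod.card,
    Fintype.card_subtype]

private lemma sum_agree (P : Fin q → Prop) [DecidablePred P] (g : Fin q → ZMod p) :
    (∑ h : Fin q → ZMod p, if ∀ j, P j → h j = g j then 1 else 0)
      = p ^ (Finset.univ.filter (fun j => ¬ P j)).card := by
  rw [Finset.sum_boole, card_agree P g, Nat.cast_id]

private lemma card_lt_filter (i : Fin q) :
    (Finset.univ.filter (fun j : Fin q => (j : ℕ) < (i : ℕ))).card = (i : ℕ) := by
  have : (Finset.univ.filter (fun j : Fin q => (j : ℕ) < (i : ℕ))) = Finset.Iio i := by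
    ext j
    simp only [Finset.mem_filter, Finset.mem_univ, true_and, Finset.mem_Iio, Fin.lt_def]
  rw [this, Fin.card_Iio]

private lemma sum_fix_one (i : Fin q) (c : ZMod p) :
    (∑ h' : Fin q → ZMod p, if h' i = c then 1 else 0) = p ^ (q - 1) := by
  have h1 : (∑ h' : Fin q → ZMod p, if h' i = c then 1 else 0)
      = ∑ h' : Fin q → ZMod p, if ∀ j, j = i → h' j = (fun _ => c) j then 1 else 0 := by
    refine Finset.sum_congr rfl fun h' _ => ?_
    refine if_congr ?_ rfl rfl
    constructor
    · rintro hh j rfl; exact hh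
    · intro hh; exact hh i rfl
  rw [h1, sum_agree]
  congr 1
  rw [Finset.filter_ne', Finset.card_erase_of_mem (Finset.mem_univ i), Finset.card_univ,
    Fintype.card_fin]

private lemma sum_fix_suffix (i : Fin q) (g : Fin q → ZMod p) :
    (∑ h' : Fin q → ZMod p, if ∀ j : Fin q, ¬ ((j : ℕ) < (i : ℕ)) → h' j = g j then 1 else 0)
      = p ^ (i : ℕ) := by
  rw [sum_agree]
  simp only [not_not]
  rw [card_lt_filter i]


private def Tcount (B : (Fin q → ZMod p) → Option (Fin q)) : ℕ :=
  ∑ h : Fin q → ZMod p, if (B h).isSome then 1 else 0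

private def Scount (B : (Fin q → ZMod p) → Option (Fin q)) (i : Fin q) : ℕ :=
  ∑ h : Fin q → ZMod p, if B h = some i then 1 else 0

private def ccount (B : (Fin q → ZMod p) → Option (Fin q)) (i : Fin q)
    (z : Fin q → ZMod p) : ℕ :=
  ∑ h : Fin q → ZMod p, if B h = some i ∧ prefixF i h = z then 1 else 0

private def Dcount (B : (Fin q → ZMod p) → Option (Fin q)) (i : Fin q) : ℕ :=
  ∑ h : Fin q → ZMod p, ∑ h' : Fin q → ZMod p,
    if B h = some i ∧ B (spliceF i h h') = some i then 1 else 0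

private def Ficount (B : (Fin q → ZMod p) → Option (Fin q)) (i : Fin q) : ℕ :=
  ∑ h : Fin q → ZMod p, ∑ h' : Fin q → ZMod p,
    if B h = some i ∧ B (spliceF i h h') = some i ∧ h' i ≠ h i then 1 else 0

private def Fcount (B : (Fin q → ZMod p) → Option (Fin q)) : ℕ :=
  ∑ h : Fin q → ZMod p, ∑ h' : Fin q → ZMod p,
    if ∃ i, B h = some i ∧ B (spliceF i h h') = some i ∧ h' i ≠ h i then 1 else 0

private lemma hT (B : (Fin q → ZMod p) → Option (Fin q)) :
    Tcount B = ∑ i, Scount B i := by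
  unfold Tcount Scount
  rw [Finset.sum_comm]
  refine Finset.sum_congr rfl fun h _ => ?_
  rcases hB : B h with _ | i0
  · simp
  · simp [Finset.sum_ite_eq]

private lemma hS (B : (Fin q → ZMod p) → Option (Fin q)) (i : Fin q) :
    Scount B i = ∑ z, ccount B i z := by
  unfold Scount ccount
  rw [Finset.sum_comm]
  refine Finset.sum_congr rfl fun h _ => ?_
  by_cases hB : B h = some i
  · simp [hB, Finset.sum_ite_eq]
  · simp [hB]

private lemma prefixF_idem (i : Fin q) (h : Fin q → ZMod p) :
    prefixF i (prefixF i h) = prefixF i h := by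
  funext j
  unfold prefixF
  by_cases hj : (j : ℕ) < (i : ℕ) <;> simp [hj]

private lemma prefixF_eq_iff (i : Fin q) (g h : Fin q → ZMod p) :
    prefixF i g = prefixF i h ↔ ∀ j : Fin q, (j : ℕ) < (i : ℕ) → h j = g j := by
  rw [funext_iff]
  constructor
  · intro H j hj
    have := H j
    simp only [prefixF, if_pos hj] at this
    exact this.symm
  · intro H j
    simp only [prefixF]
    by_cases hj : (j : ℕ) < (i : ℕ) <;> simp [hj]
    exact (H j hj).symm

private lemma spliceF_eq_iff (i : Fin q) (h h' g : Fin q → ZMod p) :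
    spliceF i h h' = g ↔ ((∀ j : Fin q, (j : ℕ) < (i : ℕ) → h j = g j) ∧
      (∀ j : Fin q, ¬ ((j : ℕ) < (i : ℕ)) → h' j = g j)) := by
  rw [funext_iff]
  constructor
  · intro H
    constructor
    · intro j hj; have := H j; simpa [spliceF, hj] using this
    · intro j hj; have := H j; simpa [spliceF, hj] using this
  · rintro ⟨H1, H2⟩ j
    by_cases hj : (j : ℕ) < (i : ℕ)
    · simpa [spliceF, hj] using H1 j hj
    · simpa [spliceF, hj] using H2 j hj

private lemma inner_splice_count (B : (Fin q → ZMod p) → Option (Fin q)) (i : Fin q)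
    (h : Fin q → ZMod p) :
    (∑ h' : Fin q → ZMod p, if B (spliceF i h h') = some i then 1 else 0)
      = p ^ (i : ℕ) * ccount B i (prefixF i h) := by
  have step1 : ∀ h' : Fin q → ZMod p,
      (if B (spliceF i h h') = some i then (1:ℕ) else 0)
        = ∑ g : Fin q → ZMod p, if spliceF i h h' = g ∧ B g = some i then 1 else 0 := by
    intro h'
    rw [Finset.sum_eq_single (spliceF i h h')]
    · by_cases hB : B (spliceF i h h') = some i <;> simp [hB]
    · intro g _ hg
      rw [if_neg]; rintro ⟨rfl, -⟩; exact hg rfl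
    · intro habs; exact absurd (Finset.mem_univ _) habs
  simp only [step1]
  rw [Finset.sum_comm]
  have step2 : ∀ g : Fin q → ZMod p,
      (∑ h' : Fin q → ZMod p, if spliceF i h h' = g ∧ B g = some i then (1:ℕ) else 0)
        = if (∀ j : Fin q, (j : ℕ) < (i : ℕ) → h j = g j) ∧ B g = some i
            then p ^ (i : ℕ) else 0 := by
    intro g
    by_cases hc : (∀ j : Fin q, (j : ℕ) < (i : ℕ) → h j = g j) ∧ B g = some i
    · rw [if_pos hc, ← sum_fix_suffix i g]
      refine Finset.sum_congr rfl fun h' _ => ?_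
      refine if_congr ?_ rfl rfl
      rw [spliceF_eq_iff]
      constructor
      · rintro ⟨⟨-, H2⟩, -⟩; exact H2
      · intro H2; exact ⟨⟨hc.1, H2⟩, hc.2⟩
    · rw [if_neg hc]
      refine Finset.sum_eq_zero fun h' _ => ?_
      rw [if_neg]
      rintro ⟨hsp, hBg⟩
      exact hc ⟨(spliceF_eq_iff i h h' g).1 hsp |>.1, hBg⟩
  simp only [step2]
  unfold ccount
  rw [Finset.mul_sum]
  refine Finset.sum_congr rfl fun g _ => ?_
  by_cases hc : B g = some i ∧ prefixF i g = prefixF i h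
  · rw [if_pos ⟨(prefixF_eq_iff i g h).1 hc.2, hc.1⟩, if_pos hc, mul_one]
  · rw [if_neg (fun hx => hc ⟨hx.2, (prefixF_eq_iff i g h).2 hx.1⟩), if_neg hc, mul_zero]


private lemma hD (B : (Fin q → ZMod p) → Option (Fin q)) (i : Fin q) :
    Dcount B i = p ^ (i : ℕ) * ∑ z, ccount B i z ^ 2 := by
  unfold Dcount
  have step1 : ∀ h : Fin q → ZMod p,
      (∑ h' : Fin q → ZMod p,
        if B h = some i ∧ B (spliceF i h h') = some i then (1:ℕ) else 0)
      = if B h = some i then p ^ (i : ℕ) * ccount B i (prefixF i h) else 0 := by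
    intro h
    by_cases hB : B h = some i
    · rw [if_pos hB, ← inner_splice_count B i h]
      refine Finset.sum_congr rfl fun h' _ => if_congr ?_ rfl rfl
      simp [hB]
    · rw [if_neg hB]
      refine Finset.sum_eq_zero fun h' _ => if_neg fun hx => hB hx.1
  simp only [step1]
  have step2 : ∀ h : Fin q → ZMod p,
      (if B h = some i then p ^ (i : ℕ) * ccount B i (prefixF i h) else 0)
      = p ^ (i : ℕ) * ∑ z : Fin q → ZMod p,
          if B h = some i ∧ prefixF i h = z then ccount B i z else 0 := by
    intro h
    rw [Finset.sum_eq_single (prefixF i h)]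
    · by_cases hB : B h = some i <;> simp [hB]
    · intro z _ hz
      exact if_neg fun hx => hz (hx.2.symm)
    · intro habs; exact absurd (Finset.mem_univ _) habs
  simp only [step2]
  rw [← Finset.mul_sum]
  congr 1
  rw [Finset.sum_comm]
  refine Finset.sum_congr rfl fun z _ => ?_
  have : ∀ h : Fin q → ZMod p,
      (if B h = some i ∧ prefixF i h = z then ccount B i z else 0)
      = (if B h = some i ∧ prefixF i h = z then 1 else 0) * ccount B i z := by
    intro h; by_cases hc : B h = some i ∧ prefixF i h = z <;> simp [hc]
  simp only [this]
  rw [← Finset.sum_mul, ← ccount, sq]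

private lemma hCS1 (B : (Fin q → ZMod p) → Option (Fin q)) (i : Fin q) :
    Scount B i ^ 2 ≤ p ^ (i : ℕ) * ∑ z, ccount B i z ^ 2 := by
  classical
  set Ps : Finset (Fin q → ZMod p) := Finset.univ.filter (fun z => prefixF i z = z) with hPs
  have hvanish : ∀ z ∈ Finset.univ, z ∉ Ps → ccount B i z = 0 := by
    intro z _ hz
    refine Finset.sum_eq_zero fun h _ => if_neg fun hx => ?_
    refine hz (Finset.mem_filter.2 ⟨Finset.mem_univ _, ?_⟩)
    rw [← hx.2, prefixF_idem]
  have hsum : Scount B i = ∑ z ∈ Ps, ccount B i z := by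
    rw [hS B i, Finset.sum_subset (Finset.subset_univ Ps) hvanish]
  have hcard : Ps.card = p ^ (i : ℕ) := by
    have heq : Ps = Finset.univ.filter
        (fun z : Fin q → ZMod p => ∀ j : Fin q, ¬ ((j : ℕ) < (i : ℕ)) → z j = 0) := by
      refine Finset.filter_congr fun z _ => ?_
      rw [funext_iff]
      constructor
      · intro H j hj
        have := H j
        simpa [prefixF, hj] using this.symm
      · intro H j
        by_cases hj : (j : ℕ) < (i : ℕ)
        · simp [prefixF, hj]
        · simpa [prefixF, hj] using (H j hj).symm
    rw [heq, card_agree (fun j : Fin q => ¬ ((j : ℕ) < (i : ℕ))) (fun _ => 0)]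
    simp only [not_not]
    rw [card_lt_filter i]
  calc Scount B i ^ 2 = (∑ z ∈ Ps, ccount B i z) ^ 2 := by rw [hsum]
    _ ≤ Ps.card * ∑ z ∈ Ps, ccount B i z ^ 2 := by
        have := sq_sum_le_card_mul_sum_sq (s := Ps) (f := fun z => ccount B i z)
        simpa using this
    _ ≤ p ^ (i : ℕ) * ∑ z, ccount B i z ^ 2 := by
        rw [hcard]
        exact Nat.mul_le_mul_left _ (Finset.sum_le_sum_of_subset (Finset.subset_univ Ps))

private lemma hDsplit (B : (Fin q → ZMod p) → Option (Fin q)) (i : Fin q) :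
    Dcount B i ≤ Ficount B i + Scount B i * p ^ (q - 1) := by
  have hE : (∑ h : Fin q → ZMod p, ∑ h' : Fin q → ZMod p,
      if B h = some i ∧ h' i = h i then (1:ℕ) else 0) = Scount B i * p ^ (q - 1) := by
    unfold Scount
    rw [Finset.sum_mul]
    refine Finset.sum_congr rfl fun h _ => ?_
    by_cases hB : B h = some i
    · simp only [hB, true_and, if_true, one_mul]
      exact sum_fix_one i (h i)
    · simp [hB]
  calc Dcount B i ≤ Ficount B i + ∑ h : Fin q → ZMod p, ∑ h' : Fin q → ZMod p,
        (if B h = some i ∧ h' i = h i then (1:ℕ) else 0) := by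
        unfold Dcount Ficount
        rw [← Finset.sum_add_distrib]
        refine Finset.sum_le_sum fun h _ => ?_
        rw [← Finset.sum_add_distrib]
        refine Finset.sum_le_sum fun h' _ => ?_
        by_cases h1 : B h = some i ∧ B (spliceF i h h') = some i
        · by_cases h2 : h' i = h i
          · have : B h = some i ∧ h' i = h i := ⟨h1.1, h2⟩
            simp [h1, this]
          · have : B h = some i ∧ B (spliceF i h h') = some i ∧ h' i ≠ h i :=
              ⟨h1.1, h1.2, h2⟩
            simp [h1, this]
        · simp [h1]
    _ = Ficount B i + Scount B i * p ^ (q - 1) := by rw [hE]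

private lemma hFsum (B : (Fin q → ZMod p) → Option (Fin q)) :
    ∑ i, Ficount B i = Fcount B := by
  unfold Ficount Fcount
  rw [Finset.sum_comm]
  refine Finset.sum_congr rfl fun h _ => ?_
  rw [Finset.sum_comm]
  refine Finset.sum_congr rfl fun h' _ => ?_
  rcases hB : B h with _ | i0
  · simp
  · rw [Finset.sum_eq_single i0]
    · refine if_congr ?_ rfl rfl
      constructor
      · intro hx; exact ⟨i0, hx⟩
      · rintro ⟨i, hx1, hx2, hx3⟩
        obtain rfl : i = i0 := (Option.some_injective _ hx1).symm
        exact ⟨hx1, hx2, hx3⟩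
    · intro i _ hi
      exact if_neg fun hx => hi (Option.some_injective _ hx.1).symm
    · intro habs; exact absurd (Finset.mem_univ _) habs

private lemma coreN (hq : 1 ≤ q) (B : (Fin q → ZMod p) → Option (Fin q)) :
    p * Tcount B ^ 2 ≤ p * q * Fcount B + q * (Tcount B * p ^ q) := by
  have h1 : Tcount B ^ 2 ≤ q * ∑ i, Scount B i ^ 2 := by
    rw [hT B]
    have := sq_sum_le_card_mul_sum_sq (s := (Finset.univ : Finset (Fin q)))
      (f := fun i => Scount B i)
    simpa using this
  have h2 : ∑ i, Scount B i ^ 2 ≤ Fcount B + Tcount B * p ^ (q - 1) := by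
    calc ∑ i, Scount B i ^ 2
        ≤ ∑ i, (Ficount B i + Scount B i * p ^ (q - 1)) :=
          Finset.sum_le_sum fun i _ => le_trans (by
            calc Scount B i ^ 2 ≤ p ^ (i : ℕ) * ∑ z, ccount B i z ^ 2 := hCS1 B i
              _ = Dcount B i := (hD B i).symm) (hDsplit B i)
      _ = Fcount B + Tcount B * p ^ (q - 1) := by
          rw [Finset.sum_add_distrib, hFsum B, ← Finset.sum_mul, ← hT B]
  have h3 : p * (p ^ (q - 1)) = p ^ q := by
    rw [← pow_succ', Nat.sub_add_cancel hq]
  calc p * Tcount B ^ 2 ≤ p * (q * (Fcount B + Tcount B * p ^ (q - 1))) :=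
        Nat.mul_le_mul_left p (le_trans h1 (Nat.mul_le_mul_left q h2))
    _ = p * q * Fcount B + q * (Tcount B * (p * p ^ (q - 1))) := by ring
    _ = p * q * Fcount B + q * (Tcount B * p ^ q) := by rw [h3]


private lemma ennreal_two_mul_le (a b : ℝ≥0∞) : 2 * (a * b) ≤ a ^ 2 + b ^ 2 := by
  rcases le_total a b with h | h
  · obtain ⟨c, rfl⟩ := exists_add_of_le h
    have he : a ^ 2 + (a + c) ^ 2 = 2 * (a * (a + c)) + c ^ 2 := by ring
    rw [he]; exact le_self_add
  · obtain ⟨c, rfl⟩ := exists_add_of_le h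
    have he : (b + c) ^ 2 + b ^ 2 = 2 * ((b + c) * b) + c ^ 2 := by ring
    rw [he]; exact le_self_add

private lemma jensen_tsum {α : Type*} (w a : α → ℝ≥0∞) (hw : ∑' x, w x ≤ 1) :
    (∑' x, w x * a x) ^ 2 ≤ ∑' x, w x * a x ^ 2 := by
  have key : 2 * (∑' x, w x * a x) ^ 2 ≤ 2 * ∑' x, w x * a x ^ 2 := by
    have e1 : (∑' x, w x * a x) ^ 2 = ∑' x, ∑' y, (w x * a x) * (w y * a y) := by
      rw [sq, ← ENNReal.tsum_mul_right]
      exact tsum_congr fun x => (ENNReal.tsum_mul_left).symm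
    calc 2 * (∑' x, w x * a x) ^ 2
        = ∑' x, ∑' y, 2 * ((w x * a x) * (w y * a y)) := by
          rw [e1, ← ENNReal.tsum_mul_left]
          exact tsum_congr fun x => (ENNReal.tsum_mul_left).symm
      _ ≤ ∑' x, ∑' y, (w x * w y * a x ^ 2 + w x * w y * a y ^ 2) := by
          refine Summable.tsum_le_tsum (fun x => Summable.tsum_le_tsum (fun y => ?_)
            ENNReal.summable ENNReal.summable) ENNReal.summable ENNReal.summable
          calc 2 * ((w x * a x) * (w y * a y)) = w x * w y * (2 * (a x * a y)) := by ring
            _ ≤ w x * w y * (a x ^ 2 + a y ^ 2) :=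
                mul_le_mul_right (ennreal_two_mul_le (a x) (a y)) _
            _ = w x * w y * a x ^ 2 + w x * w y * a y ^ 2 := by ring
      _ = ∑' x, (w x * a x ^ 2 * (∑' y, w y) + w x * (∑' y, w y * a y ^ 2)) := by
          refine tsum_congr fun x => ?_
          rw [Summable.tsum_add ENNReal.summable ENNReal.summable]
          congr 1
          · calc ∑' y, w x * w y * a x ^ 2 = ∑' y, (w x * a x ^ 2) * w y :=
                  tsum_congr fun y => by ring
              _ = (w x * a x ^ 2) * ∑' y, w y := ENNReal.tsum_mul_left.symm.symm
          · calc ∑' y, w x * w y * a y ^ 2 = ∑' y, w x * (w y * a y ^ 2) :=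
                  tsum_congr fun y => by ring
              _ = w x * ∑' y, w y * a y ^ 2 := ENNReal.tsum_mul_left
      _ ≤ ∑' x, (w x * a x ^ 2 * 1 + w x * ∑' y, w y * a y ^ 2) := by
          refine Summable.tsum_le_tsum (fun x => ?_) ENNReal.summable ENNReal.summable
          exact add_le_add_left (mul_le_mul_right hw _) _
      _ = (∑' x, w x * a x ^ 2) + (∑' x, w x) * ∑' y, w y * a y ^ 2 := by
          simp only [mul_one]
          rw [Summable.tsum_add ENNReal.summable ENNReal.summable, ENNReal.tsum_mul_right]
      _ ≤ (∑' x, w x * a x ^ 2) + 1 * ∑' y, w y * a y ^ 2 := by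
          exact add_le_add_right (mul_le_mul_left hw _) _
      _ = 2 * ∑' x, w x * a x ^ 2 := by ring
  have h2 : (2 : ℝ≥0∞) ≠ 0 := two_ne_zero
  have h2t : (2 : ℝ≥0∞) ≠ ⊤ := ENNReal.ofNat_ne_top
  exact (ENNReal.mul_le_mul_iff_right h2 h2t).1 key

private lemma perPoint (hq : 1 ≤ q) (B : (Fin q → ZMod p) → Option (Fin q)) :
    (p : ℝ≥0∞) * ((Tcount B : ℝ≥0∞) / (p : ℝ≥0∞) ^ q) ^ 2
      ≤ (p : ℝ≥0∞) * q * ((Fcount B : ℝ≥0∞) / ((p : ℝ≥0∞) ^ q * (p : ℝ≥0∞) ^ q))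
        + q * ((Tcount B : ℝ≥0∞) / (p : ℝ≥0∞) ^ q) := by
  have hp0 : (p : ℝ≥0∞) ≠ 0 := Nat.cast_ne_zero.2 (NeZero.ne p)
  have hpt : (p : ℝ≥0∞) ≠ ⊤ := ENNReal.natCast_ne_top p
  have hN0 : (p : ℝ≥0∞) ^ q ≠ 0 := pow_ne_zero _ hp0
  have hNt : (p : ℝ≥0∞) ^ q ≠ ⊤ := ENNReal.pow_ne_top hpt
  set N : ℝ≥0∞ := (p : ℝ≥0∞) ^ q with hN
  have key : ((p * Tcount B ^ 2 : ℕ) : ℝ≥0∞)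
      ≤ ((p * q * Fcount B + q * (Tcount B * p ^ q) : ℕ) : ℝ≥0∞) :=
    Nat.cast_le.2 (coreN hq B)
  have lhs_eq : (p : ℝ≥0∞) * ((Tcount B : ℝ≥0∞) / N) ^ 2
      = ((p * Tcount B ^ 2 : ℕ) : ℝ≥0∞) / (N * N) := by
    rw [show N * N = N ^ 2 from (sq N).symm]
    push_cast
    rw [div_eq_mul_inv, div_eq_mul_inv, mul_pow, ENNReal.inv_pow]
    ring_nf
    rw [ENNReal.inv_pow]
    rw [hN, ENNReal.inv_pow, ← pow_mul]
  have rhs_eq : (p : ℝ≥0∞) * q * ((Fcount B : ℝ≥0∞) / (N * N))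
        + q * ((Tcount B : ℝ≥0∞) / N)
      = ((p * q * Fcount B + q * (Tcount B * p ^ q) : ℕ) : ℝ≥0∞) / (N * N) := by
    push_cast
    rw [ENNReal.add_div]
    congr 1
    · rw [mul_div_assoc]
    · rw [← hN]
      rw [show (q : ℝ≥0∞) * ((Tcount B : ℝ≥0∞) * N) = ((q : ℝ≥0∞) * (Tcount B : ℝ≥0∞)) * N by
        ring]
      rw [ENNReal.mul_div_mul_right _ _ hN0 hNt, mul_div_assoc]
  rw [lhs_eq, rhs_eq]
  exact ENNReal.div_le_div_right key _


private def Bof {Inp Coins Out : Type*}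
    (A : Inp × (Fin q → ZMod p) × Coins → Option (Fin q × Out)) (x : Inp × Coins) :
    (Fin q → ZMod p) → Option (Fin q) :=
  fun h => (A (x.1, h, x.2)).map Prod.fst

private lemma card_H : (Fintype.card (Fin q → ZMod p) : ℝ≥0∞) = (p : ℝ≥0∞) ^ q := by
  rw [Fintype.card_fun, ZMod.card, Fintype.card_fin]
  push_cast
  rfl

private lemma acc_eq {Inp Coins Out : Type*} (dInp : PMF Inp) (dCoins : PMF Coins)
    (A : Inp × (Fin q → ZMod p) × Coins → Option (Fin q × Out)) :
    accP p q dInp dCoins A true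
      = ∑' x : Inp × Coins, (dInp x.1 * dCoins x.2) *
          ((Tcount (Bof A x) : ℝ≥0∞) / (p : ℝ≥0∞) ^ q) := by
  rw [accP, ENNReal.tsum_prod', PMF.bind_apply]
  refine tsum_congr fun inp => ?_
  rw [PMF.bind_apply, ← ENNReal.tsum_mul_left]
  refine tsum_congr fun ρ => ?_
  rw [mul_assoc]
  congr 1
  congr 1
  rw [PMF.bind_apply, tsum_fintype]
  have : ∀ h : Fin q → ZMod p,
      (PMF.uniformOfFintype (Fin q → ZMod p)) h *
        (PMF.pure (A (inp, h, ρ)).isSome) true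
      = ((p : ℝ≥0∞) ^ q)⁻¹ * (if (Bof A (inp, ρ) h).isSome then 1 else 0) := by
    intro h
    rw [PMF.uniformOfFintype_apply, card_H, PMF.pure_apply]
    congr 1
    simp only [Bof, Option.isSome_map]
    cases (A (inp, h, ρ)).isSome <;> simp
  rw [Finset.sum_congr rfl fun h _ => this h, ← Finset.mul_sum]
  rw [div_eq_mul_inv, mul_comm]
  congr 1
  rw [Tcount]
  push_cast
  rfl

private lemma fork_eq {Inp Coins Out : Type*} (dInp : PMF Inp) (dCoins : PMF Coins)
    (A : Inp × (Fin q → ZMod p) × Coins → Option (Fin q × Out)) :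
    forkP p q dInp dCoins A true
      = ∑' x : Inp × Coins, (dInp x.1 * dCoins x.2) *
          ((Fcount (Bof A x) : ℝ≥0∞) / ((p : ℝ≥0∞) ^ q * (p : ℝ≥0∞) ^ q)) := by
  rw [forkP, ENNReal.tsum_prod', PMF.bind_apply]
  refine tsum_congr fun inp => ?_
  rw [PMF.bind_apply, ← ENNReal.tsum_mul_left]
  refine tsum_congr fun ρ => ?_
  rw [mul_assoc]
  congr 1
  congr 1
  rw [PMF.bind_apply, tsum_fintype]
  refine Eq.trans (Finset.sum_congr rfl
    (g := fun h => ((p : ℝ≥0∞) ^ q)⁻¹ * (((p : ℝ≥0∞) ^ q)⁻¹ *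
      ∑ h' : Fin q → ZMod p,
        (if ∃ i, Bof A (inp, ρ) h = some i ∧
            Bof A (inp, ρ) (spliceF i h h') = some i ∧ h' i ≠ h i
          then 1 else 0))) (fun h _ => ?_)) ?_
  · rw [PMF.uniformOfFintype_apply, card_H]
    congr 1
    rcases hA : A (inp, h, ρ) with _ | ⟨i, out⟩
    · simp only [hA]
      have hz : ∀ h' : Fin q → ZMod p,
          (if ∃ i, Bof A (inp, ρ) h = some i ∧
              Bof A (inp, ρ) (spliceF i h h') = some i ∧ h' i ≠ h i
            then (1:ℝ≥0∞) else 0) = 0 := by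
        intro h'
        rw [if_neg]
        rintro ⟨i, hi, -⟩
        simp [Bof, hA] at hi
      rw [Finset.sum_congr rfl fun h' _ => hz h']
      simp [PMF.pure_apply]
    · simp only [hA]
      rw [PMF.bind_apply, tsum_fintype]
      have hsp : ∀ (k : Fin q) (h' : Fin q → ZMod p), spliceF k h h'
          = fun j : Fin q => if (j : ℕ) < (k : ℕ) then h j else h' j := fun _ _ => rfl
      refine Eq.trans (Finset.sum_congr rfl
        (g := fun h' => ((p : ℝ≥0∞) ^ q)⁻¹ *
          (if ∃ k, Bof A (inp, ρ) h = some k ∧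
              Bof A (inp, ρ) (spliceF k h h') = some k ∧ h' k ≠ h k
            then 1 else 0)) (fun h' _ => ?_)) ?_
      · rw [PMF.uniformOfFintype_apply, card_H]
        congr 1
        rcases hA2 : A (inp, (fun j => if (j : ℕ) < (i : ℕ) then h j else h' j), ρ)
          with _ | ⟨i', out'⟩
        · simp only [hA2, PMF.pure_apply]
          rw [if_neg (show ¬((true : Bool) = false) by simp), if_neg]
          rintro ⟨k, hk1, hk2, -⟩
          simp only [Bof, hA, Option.map_some] at hk1
          obtain rfl : i = k := Option.some_injective _ hk1
          simp only [Bof] at hk2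
          rw [hsp _ _, hA2] at hk2
          simp at hk2
        · simp only [hA2, PMF.pure_apply]
          have hsucc : (∃ k, Bof A (inp, ρ) h = some k ∧
              Bof A (inp, ρ) (spliceF k h h') = some k ∧ h' k ≠ h k)
              ↔ (i' = i ∧ h' i ≠ h i) := by
            constructor
            · rintro ⟨k, hk1, hk2, hk3⟩
              simp only [Bof, hA, Option.map_some] at hk1
              obtain rfl : i = k := Option.some_injective _ hk1
              simp only [Bof] at hk2
              rw [hsp _ _, hA2] at hk2
              simp only [Option.map_some] at hk2
              exact ⟨Option.some_injective _ hk2, hk3⟩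
            · rintro ⟨rfl, hne⟩
              refine ⟨_, by simp [Bof, hA], ?_, hne⟩
              show (A (inp, spliceF i' h h', ρ)).map Prod.fst = some i'
              rw [hsp _ _, hA2]
              rfl
          by_cases hc : i' = i ∧ h' i ≠ h i
          · rw [if_pos (show (true : Bool) = decide (i' = i ∧ h' i ≠ h i) by simp [hc]),
              if_pos (hsucc.2 hc)]
          · rw [if_neg (show ¬((true : Bool) = decide (i' = i ∧ h' i ≠ h i)) by simp [hc]),
              if_neg (fun hx => hc (hsucc.1 hx))]
      · rw [← Finset.mul_sum]
  · rw [← Finset.mul_sum]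
    have hcomm : ∀ h : Fin q → ZMod p, ((p : ℝ≥0∞) ^ q)⁻¹ *
        ∑ h' : Fin q → ZMod p,
          (if ∃ i, Bof A (inp, ρ) h = some i ∧
              Bof A (inp, ρ) (spliceF i h h') = some i ∧ h' i ≠ h i
            then (1:ℝ≥0∞) else 0)
        = (∑ h' : Fin q → ZMod p,
          (if ∃ i, Bof A (inp, ρ) h = some i ∧
              Bof A (inp, ρ) (spliceF i h h') = some i ∧ h' i ≠ h i
            then (1:ℝ≥0∞) else 0)) * ((p : ℝ≥0∞) ^ q)⁻¹ := fun h => mul_comm _ _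
    rw [Finset.sum_congr rfl fun h _ => hcomm h, ← Finset.sum_mul]
    rw [div_eq_mul_inv,
      ENNReal.mul_inv (Or.inl (pow_ne_zero _ (Nat.cast_ne_zero.2 (NeZero.ne p))))
        (Or.inl (ENNReal.pow_ne_top (ENNReal.natCast_ne_top p)))]
    rw [show ((Fcount (Bof A (inp, ρ)) : ℝ≥0∞)) = ∑ h : Fin q → ZMod p,
        ∑ h' : Fin q → ZMod p,
          (if ∃ i, Bof A (inp, ρ) h = some i ∧
              Bof A (inp, ρ) (spliceF i h h') = some i ∧ h' i ≠ h i
            then (1:ℝ≥0∞) else 0) from by rw [Fcount]; push_cast; rfl]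
    ring

private lemma key_ineq {Inp Coins Out : Type*} (hq : 1 ≤ q) (dInp : PMF Inp)
    (dCoins : PMF Coins) (A : Inp × (Fin q → ZMod p) × Coins → Option (Fin q × Out)) :
    (p : ℝ≥0∞) * (accP p q dInp dCoins A true) ^ 2
      ≤ (p : ℝ≥0∞) * q * (forkP p q dInp dCoins A true)
        + q * (accP p q dInp dCoins A true) := by
  have hw1 : ∑' x : Inp × Coins, dInp x.1 * dCoins x.2 = 1 := by
    rw [ENNReal.tsum_prod']
    show ∑' (a : Inp), ∑' (b : Coins), dInp a * dCoins b = 1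
    calc ∑' (a : Inp) (b : Coins), dInp a * dCoins b
        = ∑' a : Inp, dInp a * ∑' b : Coins, dCoins b :=
          tsum_congr fun a => ENNReal.tsum_mul_left
      _ = 1 := by rw [dCoins.tsum_coe]; simp only [mul_one]; exact dInp.tsum_coe
  rw [acc_eq dInp dCoins A, fork_eq dInp dCoins A]
  have jen := jensen_tsum (fun x : Inp × Coins => dInp x.1 * dCoins x.2)
    (fun x => ((Tcount (Bof A x) : ℝ≥0∞) / (p : ℝ≥0∞) ^ q)) hw1.le
  calc (p : ℝ≥0∞) * (∑' x : Inp × Coins, (dInp x.1 * dCoins x.2) *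
          ((Tcount (Bof A x) : ℝ≥0∞) / (p : ℝ≥0∞) ^ q)) ^ 2
      ≤ (p : ℝ≥0∞) * ∑' x : Inp × Coins, (dInp x.1 * dCoins x.2) *
          ((Tcount (Bof A x) : ℝ≥0∞) / (p : ℝ≥0∞) ^ q) ^ 2 := mul_le_mul_right jen _
    _ = ∑' x : Inp × Coins, (dInp x.1 * dCoins x.2) *
          ((p : ℝ≥0∞) * ((Tcount (Bof A x) : ℝ≥0∞) / (p : ℝ≥0∞) ^ q) ^ 2) := by
        rw [← ENNReal.tsum_mul_left]; exact tsum_congr fun x => by ring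
    _ ≤ ∑' x : Inp × Coins, (dInp x.1 * dCoins x.2) *
          ((p : ℝ≥0∞) * q * ((Fcount (Bof A x) : ℝ≥0∞) /
              ((p : ℝ≥0∞) ^ q * (p : ℝ≥0∞) ^ q))
            + q * ((Tcount (Bof A x) : ℝ≥0∞) / (p : ℝ≥0∞) ^ q)) :=
        Summable.tsum_le_tsum (fun x => mul_le_mul_right (perPoint hq (Bof A x)) _)
          ENNReal.summable ENNReal.summable
    _ = (p : ℝ≥0∞) * q * (∑' x : Inp × Coins, (dInp x.1 * dCoins x.2) *
            ((Fcount (Bof A x) : ℝ≥0∞) / ((p : ℝ≥0∞) ^ q * (p : ℝ≥0∞) ^ q)))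
          + q * (∑' x : Inp × Coins, (dInp x.1 * dCoins x.2) *
            ((Tcount (Bof A x) : ℝ≥0∞) / (p : ℝ≥0∞) ^ q)) := by
        rw [← ENNReal.tsum_mul_left, ← ENNReal.tsum_mul_left,
          ← Summable.tsum_add ENNReal.summable ENNReal.summable]
        exact tsum_congr fun x => by ring

end ForkAux

/-- Generalized forking lemma: `frk ≥ acc(A) · (acc(A)/q − 1/p)`. -/
theorem generalized_forking_lemma {Inp Coins Out : Type*} (p q : ℕ)
    [Fact p.Prime] [NeZero p] (hq : 1 ≤ q)
    (dInp : PMF Inp) (dCoins : PMF Coins)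
    (A : Inp × (Fin q → ZMod p) × Coins → Option (Fin q × Out)) :
    forkP p q dInp dCoins A true ≥
      accP p q dInp dCoins A true *
        (accP p q dInp dCoins A true / (q : ℝ≥0∞) - 1 / (p : ℝ≥0∞)) := by
  have key := key_ineq hq dInp dCoins A
  set acc := accP p q dInp dCoins A true with hacc
  set frk := forkP p q dInp dCoins A true with hfrk
  have hacc1 : acc ≤ 1 := PMF.coe_le_one _ _
  have hacct : acc ≠ ⊤ := (hacc1.trans_lt ENNReal.one_lt_top).ne
  have hp0 : (p : ℝ≥0∞) ≠ 0 := Nat.cast_ne_zero.2 (NeZero.ne p)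
  have hpt : (p : ℝ≥0∞) ≠ ⊤ := ENNReal.natCast_ne_top p
  have hq0 : (q : ℝ≥0∞) ≠ 0 := Nat.cast_ne_zero.2 (by omega)
  have hqt : (q : ℝ≥0∞) ≠ ⊤ := ENNReal.natCast_ne_top q
  have step : acc ^ 2 / q ≤ frk + acc / p := by
    rw [← ENNReal.mul_div_mul_left (acc ^ 2) (q : ℝ≥0∞) hp0 hpt]
    calc (p : ℝ≥0∞) * acc ^ 2 / ((p : ℝ≥0∞) * q)
        ≤ ((p : ℝ≥0∞) * q * frk + q * acc) / ((p : ℝ≥0∞) * q) :=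
          ENNReal.div_le_div_right key _
      _ = frk + acc / p := by
          rw [ENNReal.add_div]
          congr 1
          · rw [mul_div_assoc]
            exact ENNReal.mul_div_cancel (mul_ne_zero hp0 hq0)
              (ENNReal.mul_ne_top hpt hqt)
          · rw [mul_comm (p : ℝ≥0∞) (q : ℝ≥0∞),
              ENNReal.mul_div_mul_left acc (p : ℝ≥0∞) hq0 hqt]
  rw [ge_iff_le]
  calc acc * (acc / q - 1 / p)
      = acc * (acc / q) - acc * (1 / p) := ENNReal.mul_sub fun _ _ => hacct
    _ = acc ^ 2 / q - acc / p := by rw [mul_div_assoc', ← sq, mul_one_div]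
    _ ≤ frk := tsub_le_iff_right.2 step
end

section
/- Splitting-lemma-style core of the forking lemma: let X, Y be finite nonempty types with Y = ZMod p, and let f : X × Y → Option (Fin q) with acceptance probability ε = P[f(x,y) ≠ ⊥] under the uniform distribution. Then the probability that two independent samples y, y' (with the same x) satisfy f(x,y) = some i, f(x,y') = some i, and y ≠ y' for some common index i, is at least ε·(ε/q − 1/|Y|). -/
open scoped Classical

open Finset

/-- Splitting-lemma-style core of the forking lemma (single-splice abstraction). -/
theorem forking_core
    (X Y : Type*) [Fintype X] [Fintype Y] [Nonempty X] [Nonempty Y]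
    (q : ℕ) (hq : 1 ≤ q) (f : X × Y → Option (Fin q)) (ε : ℝ)
    (hε : ε = ((Finset.univ.filter fun xy : X × Y => (f xy).isSome).card : ℝ) /
        ((Fintype.card X : ℝ) * (Fintype.card Y : ℝ))) :
    ((Finset.univ.filter fun t : X × Y × Y =>
        ∃ i, f (t.1, t.2.1) = some i ∧ f (t.1, t.2.2) = some i ∧ t.2.1 ≠ t.2.2).card : ℝ) /
        ((Fintype.card X : ℝ) * (Fintype.card Y : ℝ) * (Fintype.card Y : ℝ)) ≥
      ε * (ε / (q : ℝ) - 1 / (Fintype.card Y : ℝ)) := by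
  classical
  set n : ℝ := (Fintype.card X : ℝ) with hn_def
  set m : ℝ := (Fintype.card Y : ℝ) with hm_def
  have hn : 0 < n := by positivity
  have hm : 0 < m := by positivity
  have hq' : (0:ℝ) < (q:ℝ) := by exact_mod_cast Nat.lt_of_lt_of_le Nat.zero_lt_one hq
  set χ : Option (Fin q) → Fin q → ℝ := fun a i => if a = some i then 1 else 0 with hχ
  have L1 : ∀ a b : Option (Fin q),
      (if (∃ i, a = some i ∧ b = some i) then (1:ℝ) else 0) = ∑ i, χ a i * χ b i := by
    intro a b
    cases a with
    | none => simp [hχ]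
    | some j =>
      have h1 : (∃ i, some j = some i ∧ b = some i) ↔ b = some j :=
        ⟨fun ⟨i, hi, hb⟩ => by simp_all, fun h => ⟨j, rfl, h⟩⟩
      rw [if_congr h1 rfl rfl]
      have : ∀ i : Fin q, χ (some j) i * χ b i = if j = i then χ b i else 0 := by
        intro i
        simp only [hχ, Option.some_inj]
        by_cases h : j = i <;> simp [h]
      rw [Finset.sum_congr rfl fun i _ => this i, Finset.sum_ite_eq]
      simp [hχ]
  have L2 : ∀ a : Option (Fin q), (if (a.isSome) then (1:ℝ) else 0) = ∑ i, χ a i := by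
    intro a
    cases a with
    | none => simp [hχ]
    | some j =>
      simp only [Option.isSome_some, if_true, hχ, Option.some_inj]
      rw [Finset.sum_ite_eq]
      simp
  set p : X → Fin q → ℝ := fun x i => ∑ y, χ (f (x, y)) i with hp
  have hp_nonneg : ∀ x i, 0 ≤ p x i := by
    intro x i
    apply Finset.sum_nonneg
    intro y _
    simp only [hχ]
    positivity
  -- S : total acceptance count
  have hS : ((Finset.univ.filter fun xy : X × Y => (f xy).isSome).card : ℝ)
      = ∑ x, ∑ i, p x i := by
    rw [Finset.card_filter]
    push_cast [apply_ite (Nat.cast : ℕ → ℝ)]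
    rw [Fintype.sum_prod_type]
    refine Finset.sum_congr rfl fun x _ => ?_
    rw [Finset.sum_comm]
    exact Finset.sum_congr rfl fun y _ => L2 _
  -- A : forking count
  have hA : ((Finset.univ.filter fun t : X × Y × Y =>
        ∃ i, f (t.1, t.2.1) = some i ∧ f (t.1, t.2.2) = some i ∧ t.2.1 ≠ t.2.2).card : ℝ)
      = (∑ x, ∑ i, (p x i)^2) - (∑ x, ∑ i, p x i) := by
    rw [Finset.card_filter]
    push_cast [apply_ite (Nat.cast : ℕ → ℝ)]
    rw [Fintype.sum_prod_type, ← Finset.sum_sub_distrib]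
    refine Finset.sum_congr rfl fun x _ => ?_
    rw [Fintype.sum_prod_type]
    have step : ∀ y y' : Y,
        (if (∃ i, f (x, y) = some i ∧ f (x, y') = some i ∧ y ≠ y') then (1:ℝ) else 0)
        = (∑ i, χ (f (x,y)) i * χ (f (x,y')) i)
          - (if y = y' then ∑ i, χ (f (x,y)) i * χ (f (x,y')) i else 0) := by
      intro y y'
      by_cases h : y = y'
      · simp [h]
      · have h2 : (∃ i, f (x, y) = some i ∧ f (x, y') = some i ∧ y ≠ y')
            ↔ (∃ i, f (x, y) = some i ∧ f (x, y') = some i) := by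
          constructor
          · rintro ⟨i, h1, h2, _⟩; exact ⟨i, h1, h2⟩
          · rintro ⟨i, h1, h2⟩; exact ⟨i, h1, h2, h⟩
        rw [if_congr h2 rfl rfl, L1, if_neg h, sub_zero]
    calc (∑ y, ∑ y',
          if (∃ i, f (x, y) = some i ∧ f (x, y') = some i ∧ y ≠ y') then (1:ℝ) else 0)
        = ∑ y, ∑ y', ((∑ i, χ (f (x,y)) i * χ (f (x,y')) i)
            - (if y = y' then ∑ i, χ (f (x,y)) i * χ (f (x,y')) i else 0)) := by
          exact Finset.sum_congr rfl fun y _ => Finset.sum_congr rfl fun y' _ => step y y'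
      _ = (∑ y, ∑ y', ∑ i, χ (f (x,y)) i * χ (f (x,y')) i)
            - ∑ y, ∑ y', (if y = y' then ∑ i, χ (f (x,y)) i * χ (f (x,y')) i else 0) := by
          rw [← Finset.sum_sub_distrib]
          exact Finset.sum_congr rfl fun y _ => by rw [← Finset.sum_sub_distrib]
      _ = (∑ i, (p x i)^2) - ∑ i, p x i := by
          congr 1
          · calc (∑ y, ∑ y', ∑ i, χ (f (x,y)) i * χ (f (x,y')) i)
                = ∑ y, ∑ i, ∑ y', χ (f (x,y)) i * χ (f (x,y')) i :=
                  Finset.sum_congr rfl fun y _ => Finset.sum_comm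
              _ = ∑ i, ∑ y, ∑ y', χ (f (x,y)) i * χ (f (x,y')) i := Finset.sum_comm
              _ = ∑ i, (p x i)^2 := by
                  refine Finset.sum_congr rfl fun i _ => ?_
                  simp only [hp, sq]
                  exact (Finset.sum_mul_sum _ _ _ _).symm
          · calc (∑ y, ∑ y', if y = y' then ∑ i, χ (f (x,y)) i * χ (f (x,y')) i else 0)
                = ∑ y, ∑ i, χ (f (x,y)) i * χ (f (x,y)) i := by
                  refine Finset.sum_congr rfl fun y _ => ?_
                  rw [Finset.sum_ite_eq]
                  simp
              _ = ∑ y, ∑ i, χ (f (x,y)) i := by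
                  refine Finset.sum_congr rfl fun y _ => Finset.sum_congr rfl fun i _ => ?_
                  simp only [hχ]
                  by_cases h : f (x, y) = some i <;> simp [h]
              _ = ∑ i, p x i := Finset.sum_comm
  -- Cauchy-Schwarz
  set S : ℝ := ∑ x, ∑ i, p x i with hS_def
  set T : ℝ := ∑ x, ∑ i, (p x i)^2 with hT_def
  have hS_nonneg : 0 ≤ S :=
    Finset.sum_nonneg fun x _ => Finset.sum_nonneg fun i _ => hp_nonneg x i
  have hCS : S^2 ≤ n * (q:ℝ) * T := by
    have h := sq_sum_le_card_mul_sum_sq (s := (Finset.univ : Finset (X × Fin q)))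
      (f := fun t => p t.1 t.2)
    simp only [Fintype.sum_prod_type, Finset.card_univ, Fintype.card_prod,
      Fintype.card_fin, Nat.cast_mul] at h
    rw [hS_def, hT_def, hn_def]
    exact_mod_cast h
  rw [hA, hε, hS, ge_iff_le]
  have expand : S / (n * m) * (S / (n * m) / (q:ℝ) - 1 / m)
      = (S^2 / (n * (q:ℝ)) - S) / (n * m * m) := by
    field_simp
  rw [expand]
  gcongr (?_ - S) / (n * m * m)
  rw [div_le_iff₀ (by positivity)]
  linarith [hCS]
end

section
/- Extraction of the honest signer's secret key from two aggregated discrete logs: suppose X̃ = X^{a·c} · B and X̃' = X^{a·c'} · B for the same group element B, where X = g^x has prime order p, and suppose x̃, x̃' ∈ ZMod p satisfy g^{x̃} = X̃ and g^{x̃'} = X̃' with a·c ≠ a·c'. Then x = (x̃ − x̃')·(a·c − a·c')⁻¹. -/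
/-- Extraction of the honest signer's secret key from two aggregated discrete logs. -/
theorem extract_honest_key
    {G : Type*} [Group G] (g : G) (p : ℕ) [Fact p.Prime]
    (hg : orderOf g = p) (x b a c c' xt xt' : ZMod p)
    (X B : G) (hX : X = g ^ x.val) (hB : B = g ^ b.val)
    (h1 : g ^ xt.val = X ^ (a * c).val * B)
    (h2 : g ^ xt'.val = X ^ (a * c').val * B)
    (hne : a * c ≠ a * c') :
    x = (xt - xt') * (a * c - a * c')⁻¹ := by
  have key : ∀ m n : ℕ, g ^ m = g ^ n → (m : ZMod p) = n := by
    intro m n h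
    rw [ZMod.natCast_eq_natCast_iff]
    exact hg ▸ pow_eq_pow_iff_modEq.mp h
  subst hX hB
  rw [← pow_mul, ← pow_add] at h1 h2
  have e1 : xt = x * (a * c) + b := by
    have := key _ _ h1
    push_cast [ZMod.natCast_val, ZMod.cast_id] at this
    exact this
  have e2 : xt' = x * (a * c') + b := by
    have := key _ _ h2
    push_cast [ZMod.natCast_val, ZMod.cast_id] at this
    exact this
  have hsub : xt - xt' = x * (a * c - a * c') := by rw [e1, e2]; ring
  rw [hsub, mul_assoc, mul_inv_cancel₀ (sub_ne_zero.mpr hne), mul_one]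
end
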